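/- There exists a constant C > 0, depending only on δ, β_S, β_Ω, such that for all h ∈ (0,1/4) the test field satisfies the L² bound ∫_{Ω_{h,δ}} |φ̃_h(x)|² dx ≤ C². -/

import Mathlib

open Real MeasureTheory intervalIntegral

noncomputable section

/-- `γ_s(r) = 1 - √(1 - r²)`. -/
def gam (r : ℝ) : ℝ := 1 - Real.sqrt (1 - r ^ 2)

/-- `α_P(r) = (h + γ_s(r)) / β_Ω`. -/
def aP (βΩ h r : ℝ) : ℝ := (h + gam r) / βΩ

/-- `α_S(r) = (1/β_S + 2) (h + γ_s(r))`. -/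
def aS (βS h r : ℝ) : ℝ := (1 / βS + 2) * (h + gam r)

/-- The cubic `Φ(r,t) = P₁(r) t + P₂(r) t² + P₃(r) t³` of the slip case. -/
def Phi (βS βΩ h r t : ℝ) : ℝ :=
  6 * (2 + aS βS h r) / (12 + 4 * (aS βS h r + aP βΩ h r) + aS βS h r * aP βΩ h r) * t +
  3 * (2 + aS βS h r) * aP βΩ h r / (12 + 4 * (aS βS h r + aP βΩ h r) + aS βS h r * aP βΩ h r) * t ^ 2 +
  -(2 * (aS βS h r + aS βS h r * aP βΩ h r + aP βΩ h r)) / (12 + 4 * (aS βS h r + aP βΩ h r) + aS βS h r * aP βΩ h r) * t ^ 3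

/-- `Ψ(r,z) = Φ(r, z / (h + γ_s(r)))`. -/
def Psi (βS βΩ h r z : ℝ) : ℝ := Phi βS βΩ h r (z / (h + gam r))

/-- Partial derivative in the first (`r`) variable. -/
def dR (f : ℝ → ℝ → ℝ) : ℝ → ℝ → ℝ := fun r z => deriv (fun r' => f r' z) r

/-- Partial derivative in the second (`z`) variable. -/
def dZ (f : ℝ → ℝ → ℝ) : ℝ → ℝ → ℝ := fun r z => deriv (fun z' => f r z') z

/-- `r(x) = √(x₁² + x₂²)`. -/
def rad (x : ℝ × ℝ × ℝ) : ℝ := Real.sqrt (x.1 ^ 2 + x.2.1 ^ 2)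

/-- The cusp region `Ω_{h,δ} = {x : 0 < x₃ < h + γ_s(r), r < δ}`. -/
def Omg (h δ : ℝ) : Set (ℝ × ℝ × ℝ) :=
  {x | 0 < x.2.2 ∧ x.2.2 < h + gam (rad x) ∧ rad x < δ}

/-- First component of the test field `φ̃_h`. -/
def tphi1 (βS βΩ h : ℝ) (x : ℝ × ℝ × ℝ) : ℝ :=
  1 / 2 * (-x.1 * dZ (Psi βS βΩ h) (rad x) x.2.2)

/-- Second component of the test field `φ̃_h`. -/
def tphi2 (βS βΩ h : ℝ) (x : ℝ × ℝ × ℝ) : ℝ :=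
  1 / 2 * (-x.2.1 * dZ (Psi βS βΩ h) (rad x) x.2.2)

/-- Third component of the test field `φ̃_h`: `(1/(2r)) ∂_r[r² Ψ(r,z)]` at `z = x₃`. -/
def tphi3 (βS βΩ h : ℝ) (x : ℝ × ℝ × ℝ) : ℝ :=
  1 / 2 * (1 / rad x * deriv (fun r' => r' ^ 2 * Psi βS βΩ h r' x.2.2) (rad x))

/-- Partial derivative `∂₁` of a function on `ℝ³`. -/
def p1 (f : ℝ × ℝ × ℝ → ℝ) (x : ℝ × ℝ × ℝ) : ℝ := deriv (fun s => f (s, x.2.1, x.2.2)) x.1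

/-- Partial derivative `∂₂` of a function on `ℝ³`. -/
def p2 (f : ℝ × ℝ × ℝ → ℝ) (x : ℝ × ℝ × ℝ) : ℝ := deriv (fun s => f (x.1, s, x.2.2)) x.2.1

/-- Partial derivative `∂₃` of a function on `ℝ³`. -/
def p3 (f : ℝ × ℝ × ℝ → ℝ) (x : ℝ × ℝ × ℝ) : ℝ := deriv (fun s => f (x.1, x.2.1, s)) x.2.2

lemma gam_nonneg (r : ℝ) : 0 ≤ gam r := by
  have h1 : Real.sqrt (1 - r ^ 2) ≤ Real.sqrt 1 := Real.sqrt_le_sqrt (by nlinarith [sq_nonneg r])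
  rw [Real.sqrt_one] at h1
  simp only [gam]; linarith

lemma gam_le_one (r : ℝ) : gam r ≤ 1 := by
  have := Real.sqrt_nonneg (1 - r ^ 2); simp only [gam]; linarith

lemma sq_le_two_gam {r : ℝ} (h1 : r ^ 2 ≤ 1) : r ^ 2 ≤ 2 * gam r := by
  have hs : Real.sqrt (1 - r ^ 2) ^ 2 = 1 - r ^ 2 := Real.sq_sqrt (by linarith)
  have h0 : 0 ≤ Real.sqrt (1 - r ^ 2) := Real.sqrt_nonneg _
  have : Real.sqrt (1 - r ^ 2) ≤ 1 - r ^ 2 / 2 := by nlinarith [sq_nonneg (Real.sqrt (1 - r^2) - 1)]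
  simp only [gam]; linarith

lemma hasDerivAt_gam {r : ℝ} (h : r ^ 2 < 1) :
    HasDerivAt gam (r / Real.sqrt (1 - r ^ 2)) r := by
  have hs : (0:ℝ) < 1 - r ^ 2 := by linarith
  have hsq : 0 < Real.sqrt (1 - r ^ 2) := Real.sqrt_pos.2 hs
  have h1 : HasDerivAt (fun r' : ℝ => 1 - r' ^ 2) (-(2 * r)) r := by
    simpa using ((hasDerivAt_pow 2 r).const_sub 1)
  have h2 : HasDerivAt (fun r' : ℝ => Real.sqrt (1 - r' ^ 2))
      (1 / (2 * Real.sqrt (1 - r ^ 2)) * (-(2 * r))) r :=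
    (Real.hasDerivAt_sqrt (ne_of_gt hs)).comp r h1
  have h3 := h2.const_sub 1
  refine h3.congr_deriv ?_
  field_simp
def DD (βS βΩ A : ℝ) : ℝ :=
  12 + 4 * ((1 / βS + 2) * A + A / βΩ) + (1 / βS + 2) * A * (A / βΩ)

def Nq1 (βS A : ℝ) : ℝ := 6 * (2 + (1 / βS + 2) * A)
def Nq2 (βS βΩ A : ℝ) : ℝ := 3 * (2 + (1 / βS + 2) * A) * (A / βΩ)
def Nq3 (βS βΩ A : ℝ) : ℝ :=
  -(2 * ((1 / βS + 2) * A + (1 / βS + 2) * A * (A / βΩ) + A / βΩ))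

def q1 (βS βΩ A : ℝ) : ℝ := Nq1 βS A / DD βS βΩ A
def q2 (βS βΩ A : ℝ) : ℝ := Nq2 βS βΩ A / DD βS βΩ A
def q3 (βS βΩ A : ℝ) : ℝ := Nq3 βS βΩ A / DD βS βΩ A

def dDD (βS βΩ A : ℝ) : ℝ := 4 * ((1 / βS + 2) + 1 / βΩ) + 2 * (1 / βS + 2) * A / βΩ
def dNq1 (βS : ℝ) : ℝ := 6 * (1 / βS + 2)
def dNq2 (βS βΩ A : ℝ) : ℝ := 3 * (1 / βS + 2) * (A / βΩ) + 3 * (2 + (1 / βS + 2) * A) / βΩ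
def dNq3 (βS βΩ A : ℝ) : ℝ :=
  -(2 * ((1 / βS + 2) + 2 * (1 / βS + 2) * A / βΩ + 1 / βΩ))

def dq1 (βS βΩ A : ℝ) : ℝ :=
  (dNq1 βS * DD βS βΩ A - Nq1 βS A * dDD βS βΩ A) / DD βS βΩ A ^ 2
def dq2 (βS βΩ A : ℝ) : ℝ :=
  (dNq2 βS βΩ A * DD βS βΩ A - Nq2 βS βΩ A * dDD βS βΩ A) / DD βS βΩ A ^ 2
def dq3 (βS βΩ A : ℝ) : ℝ :=
  (dNq3 βS βΩ A * DD βS βΩ A - Nq3 βS βΩ A * dDD βS βΩ A) / DD βS βΩ A ^ 2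

lemma DD_ge {βS βΩ A : ℝ} (hβS : 0 < βS) (hβΩ : 0 < βΩ) (hA : 0 ≤ A) :
    12 ≤ DD βS βΩ A := by
  have h1 : 0 ≤ (1 / βS + 2) * A := by positivity
  have h2 : 0 ≤ A / βΩ := by positivity
  have h3 : 0 ≤ (1 / βS + 2) * A * (A / βΩ) := by positivity
  simp only [DD]; linarith

lemma hasDerivAt_DD (βS βΩ A : ℝ) :
    HasDerivAt (fun A => DD βS βΩ A) (dDD βS βΩ A) A := by
  have h := ((((hasDerivAt_id A).const_mul (1/βS+2)).add ((hasDerivAt_id A).div_const βΩ)).const_mul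
      4).const_add 12 |>.add (((hasDerivAt_id A).const_mul (1/βS+2)).mul ((hasDerivAt_id A).div_const βΩ))
  refine h.congr_deriv ?_
  simp only [dDD, id_eq]; field_simp; ring

lemma hasDerivAt_Nq1 (βS βΩ A : ℝ) : HasDerivAt (fun A => Nq1 βS A) (dNq1 βS) A := by
  have h := (((hasDerivAt_id A).const_mul (1/βS+2)).const_add 2).const_mul 6
  refine h.congr_deriv ?_
  simp only [dNq1]; ring

lemma hasDerivAt_Nq2 (βS βΩ A : ℝ) : HasDerivAt (fun A => Nq2 βS βΩ A) (dNq2 βS βΩ A) A := by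
  have h := ((((hasDerivAt_id A).const_mul (1/βS+2)).const_add 2).const_mul 3).mul
      ((hasDerivAt_id A).div_const βΩ)
  refine h.congr_deriv ?_
  simp only [dNq2, id_eq]; ring

lemma hasDerivAt_Nq3 (βS βΩ A : ℝ) : HasDerivAt (fun A => Nq3 βS βΩ A) (dNq3 βS βΩ A) A := by
  have h := ((((hasDerivAt_id A).const_mul (1/βS+2)).add
      (((hasDerivAt_id A).const_mul (1/βS+2)).mul ((hasDerivAt_id A).div_const βΩ))).add
      ((hasDerivAt_id A).div_const βΩ)).const_mul 2 |>.neg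
  refine h.congr_deriv ?_
  simp only [dNq3, id_eq]; field_simp; ring

lemma hasDerivAt_q1 {βS βΩ A : ℝ} (hD : DD βS βΩ A ≠ 0) :
    HasDerivAt (fun A => q1 βS βΩ A) (dq1 βS βΩ A) A :=
  (hasDerivAt_Nq1 βS βΩ A).div (hasDerivAt_DD βS βΩ A) hD

lemma hasDerivAt_q2 {βS βΩ A : ℝ} (hD : DD βS βΩ A ≠ 0) :
    HasDerivAt (fun A => q2 βS βΩ A) (dq2 βS βΩ A) A :=
  (hasDerivAt_Nq2 βS βΩ A).div (hasDerivAt_DD βS βΩ A) hD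

lemma hasDerivAt_q3 {βS βΩ A : ℝ} (hD : DD βS βΩ A ≠ 0) :
    HasDerivAt (fun A => q3 βS βΩ A) (dq3 βS βΩ A) A :=
  (hasDerivAt_Nq3 βS βΩ A).div (hasDerivAt_DD βS βΩ A) hD

lemma cont_DD (βS βΩ : ℝ) : Continuous fun A => DD βS βΩ A := by
  simp only [DD]; fun_prop

lemma exists_Q (βS βΩ : ℝ) (hβS : 0 < βS) (hβΩ : 0 < βΩ) :
    ∃ Q : ℝ, 1 ≤ Q ∧ ∀ A ∈ Set.Icc (0:ℝ) 2,
      |q1 βS βΩ A| + |q2 βS βΩ A| + |q3 βS βΩ A| +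
      |dq1 βS βΩ A| + |dq2 βS βΩ A| + |dq3 βS βΩ A| ≤ Q := by
  have hne : ∀ A ∈ Set.Icc (0:ℝ) 2, DD βS βΩ A ≠ 0 := fun A hA =>
    ne_of_gt (lt_of_lt_of_le (by norm_num) (DD_ge hβS hβΩ hA.1))
  have hne2 : ∀ A ∈ Set.Icc (0:ℝ) 2, DD βS βΩ A ^ 2 ≠ 0 := fun A hA => pow_ne_zero _ (hne A hA)
  have cN1 : Continuous fun A => Nq1 βS A := by simp only [Nq1]; fun_prop
  have cN2 : Continuous fun A => Nq2 βS βΩ A := by simp only [Nq2]; fun_prop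
  have cN3 : Continuous fun A => Nq3 βS βΩ A := by simp only [Nq3]; fun_prop
  have cdD : Continuous fun A => dDD βS βΩ A := by simp only [dDD]; fun_prop
  have cdN2 : Continuous fun A => dNq2 βS βΩ A := by simp only [dNq2]; fun_prop
  have cdN3 : Continuous fun A => dNq3 βS βΩ A := by simp only [dNq3]; fun_prop
  have cq1 : ContinuousOn (fun A => q1 βS βΩ A) (Set.Icc (0:ℝ) 2) :=
    ContinuousOn.div cN1.continuousOn (cont_DD βS βΩ).continuousOn hne
  have cq2 : ContinuousOn (fun A => q2 βS βΩ A) (Set.Icc (0:ℝ) 2) :=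
    ContinuousOn.div cN2.continuousOn (cont_DD βS βΩ).continuousOn hne
  have cq3 : ContinuousOn (fun A => q3 βS βΩ A) (Set.Icc (0:ℝ) 2) :=
    ContinuousOn.div cN3.continuousOn (cont_DD βS βΩ).continuousOn hne
  have cnum1 : Continuous fun A => dNq1 βS * DD βS βΩ A - Nq1 βS A * dDD βS βΩ A :=
    (continuous_const.mul (cont_DD βS βΩ)).sub (cN1.mul cdD)
  have cnum2 : Continuous fun A => dNq2 βS βΩ A * DD βS βΩ A - Nq2 βS βΩ A * dDD βS βΩ A :=
    (cdN2.mul (cont_DD βS βΩ)).sub (cN2.mul cdD)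
  have cnum3 : Continuous fun A => dNq3 βS βΩ A * DD βS βΩ A - Nq3 βS βΩ A * dDD βS βΩ A :=
    (cdN3.mul (cont_DD βS βΩ)).sub (cN3.mul cdD)
  have cdq1 : ContinuousOn (fun A => dq1 βS βΩ A) (Set.Icc (0:ℝ) 2) :=
    ContinuousOn.div cnum1.continuousOn
      ((cont_DD βS βΩ).pow 2).continuousOn hne2
  have cdq2 : ContinuousOn (fun A => dq2 βS βΩ A) (Set.Icc (0:ℝ) 2) :=
    ContinuousOn.div cnum2.continuousOn
      ((cont_DD βS βΩ).pow 2).continuousOn hne2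
  have cdq3 : ContinuousOn (fun A => dq3 βS βΩ A) (Set.Icc (0:ℝ) 2) :=
    ContinuousOn.div cnum3.continuousOn
      ((cont_DD βS βΩ).pow 2).continuousOn hne2
  have cW : ContinuousOn (fun A => |q1 βS βΩ A| + |q2 βS βΩ A| + |q3 βS βΩ A| +
      |dq1 βS βΩ A| + |dq2 βS βΩ A| + |dq3 βS βΩ A|) (Set.Icc (0:ℝ) 2) :=
    ((((cq1.abs.add cq2.abs).add cq3.abs).add cdq1.abs).add cdq2.abs).add cdq3.abs
  obtain ⟨Q, hQ⟩ := (isCompact_Icc).exists_bound_of_continuousOn cW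
  refine ⟨max Q 1, le_max_right _ _, fun A hA => ?_⟩
  calc _ ≤ ‖|q1 βS βΩ A| + |q2 βS βΩ A| + |q3 βS βΩ A| +
      |dq1 βS βΩ A| + |dq2 βS βΩ A| + |dq3 βS βΩ A|‖ := le_abs_self _
    _ ≤ Q := hQ A hA
    _ ≤ max Q 1 := le_max_left _ _

lemma Psi_eq (βS βΩ h r z : ℝ) :
    Psi βS βΩ h r z = q1 βS βΩ (h + gam r) * (z / (h + gam r))
      + q2 βS βΩ (h + gam r) * (z / (h + gam r)) ^ 2
      + q3 βS βΩ (h + gam r) * (z / (h + gam r)) ^ 3 := rfl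

lemma hasDerivAt_Psi_z (βS βΩ h r z : ℝ) :
    HasDerivAt (fun z' => Psi βS βΩ h r z')
      ((q1 βS βΩ (h + gam r) + 2 * q2 βS βΩ (h + gam r) * (z / (h + gam r)) +
        3 * q3 βS βΩ (h + gam r) * (z / (h + gam r)) ^ 2) / (h + gam r)) z := by
  have h1 : HasDerivAt (fun z' : ℝ => z' / (h + gam r)) (1 / (h + gam r)) z := by
    simpa using (hasDerivAt_id z).div_const (h + gam r)
  have h2 := ((h1.const_mul (q1 βS βΩ (h + gam r))).add
      ((h1.pow 2).const_mul (q2 βS βΩ (h + gam r)))).add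
      ((h1.pow 3).const_mul (q3 βS βΩ (h + gam r)))
  have hfun : (fun z' => Psi βS βΩ h r z')
      = fun z' => q1 βS βΩ (h + gam r) * (z' / (h + gam r))
        + q2 βS βΩ (h + gam r) * (z' / (h + gam r)) ^ 2
        + q3 βS βΩ (h + gam r) * (z' / (h + gam r)) ^ 3 := rfl
  rw [hfun]
  refine h2.congr_deriv ?_
  ring

lemma hasDerivAt_r2Psi (βS βΩ h z : ℝ) {r : ℝ} (hr2 : r ^ 2 < 1)
    (hA : h + gam r ≠ 0) (hD : DD βS βΩ (h + gam r) ≠ 0) :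
    HasDerivAt (fun r' => r' ^ 2 * Psi βS βΩ h r' z)
      (2 * r * (q1 βS βΩ (h + gam r) * (z / (h + gam r))
          + q2 βS βΩ (h + gam r) * (z / (h + gam r)) ^ 2
          + q3 βS βΩ (h + gam r) * (z / (h + gam r)) ^ 3)
       + r ^ 2 * (
          (dq1 βS βΩ (h + gam r) * (z / (h + gam r))
            + dq2 βS βΩ (h + gam r) * (z / (h + gam r)) ^ 2
            + dq3 βS βΩ (h + gam r) * (z / (h + gam r)) ^ 3) * (r / Real.sqrt (1 - r ^ 2))
          - (q1 βS βΩ (h + gam r) + 2 * q2 βS βΩ (h + gam r) * (z / (h + gam r))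
            + 3 * q3 βS βΩ (h + gam r) * (z / (h + gam r)) ^ 2)
            * (z * (r / Real.sqrt (1 - r ^ 2)) / (h + gam r) ^ 2))) r := by
  have hA' : HasDerivAt (fun r' => h + gam r') (r / Real.sqrt (1 - r ^ 2)) r :=
    (hasDerivAt_gam hr2).const_add h
  have hq1c : HasDerivAt (fun r' => q1 βS βΩ (h + gam r'))
      (dq1 βS βΩ (h + gam r) * (r / Real.sqrt (1 - r ^ 2))) r :=
    ((hasDerivAt_q1 hD).comp r hA' :)
  have hq2c : HasDerivAt (fun r' => q2 βS βΩ (h + gam r'))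
      (dq2 βS βΩ (h + gam r) * (r / Real.sqrt (1 - r ^ 2))) r :=
    ((hasDerivAt_q2 hD).comp r hA' :)
  have hq3c : HasDerivAt (fun r' => q3 βS βΩ (h + gam r'))
      (dq3 βS βΩ (h + gam r) * (r / Real.sqrt (1 - r ^ 2))) r :=
    ((hasDerivAt_q3 hD).comp r hA' :)
  have hT : HasDerivAt (fun r' => z / (h + gam r'))
      ((0 * (h + gam r) - z * (r / Real.sqrt (1 - r ^ 2))) / (h + gam r) ^ 2) r :=
    (hasDerivAt_const r z).div hA' hA
  have hS := ((hq1c.mul hT).add (hq2c.mul (hT.pow 2))).add (hq3c.mul (hT.pow 3))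
  have hfull := (hasDerivAt_pow 2 r).mul hS
  have hfun : (fun r' => r' ^ 2 * Psi βS βΩ h r' z)
      = fun r' => r' ^ 2 * (q1 βS βΩ (h + gam r') * (z / (h + gam r'))
        + q2 βS βΩ (h + gam r') * (z / (h + gam r')) ^ 2
        + q3 βS βΩ (h + gam r') * (z / (h + gam r')) ^ 3) := rfl
  rw [hfun]
  refine hfull.congr_deriv ?_
  simp only [Pi.mul_apply, Pi.pow_apply, Pi.add_apply]
  ring

set_option maxHeartbeats 2000000 in
lemma integrand_bound (βS βΩ : ℝ) (hβS : 0 < βS) (hβΩ : 0 < βΩ) (Q : ℝ) (hQ1 : 1 ≤ Q)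
    (hQ : ∀ A ∈ Set.Icc (0:ℝ) 2, |q1 βS βΩ A| + |q2 βS βΩ A| + |q3 βS βΩ A| +
      |dq1 βS βΩ A| + |dq2 βS βΩ A| + |dq3 βS βΩ A| ≤ Q)
    {δ h : ℝ} (hδ : δ ∈ Set.Ioo (0:ℝ) (1/4)) (hh : h ∈ Set.Ioo (0:ℝ) (1/4))
    {x : ℝ × ℝ × ℝ} (hx : x ∈ Omg h δ) :
    tphi1 βS βΩ h x ^ 2 + tphi2 βS βΩ h x ^ 2 + tphi3 βS βΩ h x ^ 2
      ≤ 700 * Q ^ 2 / (h + gam (rad x)) := by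
  obtain ⟨hz0, hzA, hrδ⟩ := hx
  obtain ⟨r, hrdef⟩ : ∃ u : ℝ, u = rad x := ⟨_, rfl⟩
  obtain ⟨z, hzdef⟩ : ∃ u : ℝ, u = x.2.2 := ⟨_, rfl⟩
  rw [← hrdef] at hzA hrδ
  rw [← hzdef] at hz0 hzA
  rw [← hrdef]
  obtain ⟨A, hAdef⟩ : ∃ u : ℝ, u = h + gam r := ⟨_, rfl⟩
  rw [← hAdef] at hzA
  rw [← hAdef]
  have hr0 : 0 ≤ r := hrdef ▸ Real.sqrt_nonneg _
  have hrlt : r < 1/4 := lt_trans hrδ hδ.2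
  have hr21 : r ^ 2 < 1 := by nlinarith
  have hgam0 := gam_nonneg r
  have hgam1 := gam_le_one r
  have hA0 : 0 < A := by rw [hAdef]; linarith [hh.1]
  have hAne : A ≠ 0 := ne_of_gt hA0
  have hAne' : h + gam r ≠ 0 := hAdef ▸ hAne
  have hAle2 : A ≤ 2 := by rw [hAdef]; linarith [hh.2]
  have hDD : DD βS βΩ (h + gam r) ≠ 0 := by
    rw [← hAdef]
    exact ne_of_gt (lt_of_lt_of_le (by norm_num) (DD_ge hβS hβΩ hA0.le))
  have hQ0 : (0:ℝ) < Q := lt_of_lt_of_le one_pos hQ1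
  have ht0 : 0 ≤ z / A := le_of_lt (div_pos hz0 hA0)
  have ht1 : z / A ≤ 1 := by rw [div_le_one hA0]; exact le_of_lt hzA
  have hQA := hQ A ⟨hA0.le, hAle2⟩
  have a1 := abs_nonneg (q1 βS βΩ A); have a2 := abs_nonneg (q2 βS βΩ A)
  have a3 := abs_nonneg (q3 βS βΩ A); have a4 := abs_nonneg (dq1 βS βΩ A)
  have a5 := abs_nonneg (dq2 βS βΩ A); have a6 := abs_nonneg (dq3 βS βΩ A)
  have hq1 : |q1 βS βΩ A| ≤ Q := by linarith
  have hq2 : |q2 βS βΩ A| ≤ Q := by linarith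
  have hq3 : |q3 βS βΩ A| ≤ Q := by linarith
  have hdq1 : |dq1 βS βΩ A| ≤ Q := by linarith
  have hdq2 : |dq2 βS βΩ A| ≤ Q := by linarith
  have hdq3 : |dq3 βS βΩ A| ≤ Q := by linarith
  have hs0 : (0:ℝ) ≤ 1 - r ^ 2 := by linarith
  have hsq : 1/2 ≤ Real.sqrt (1 - r ^ 2) := by
    nlinarith [Real.sq_sqrt hs0, Real.sqrt_nonneg (1 - r ^ 2)]
  obtain ⟨g, hgdef⟩ : ∃ u : ℝ, u = r / Real.sqrt (1 - r ^ 2) := ⟨_, rfl⟩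
  have hg0 : 0 ≤ g := hgdef ▸ div_nonneg hr0 (by linarith)
  have hg2 : g ≤ 2 * r := by
    rw [hgdef, div_le_iff₀ (by linarith)]; nlinarith
  have hr2A : r ^ 2 ≤ 2 * A := by
    have := sq_le_two_gam hr21.le; rw [hAdef]; linarith [hh.1]
  obtain ⟨t, htdef⟩ : ∃ u : ℝ, u = z / A := ⟨_, rfl⟩
  rw [← htdef] at ht0 ht1
  have htpow2 : t ^ 2 ≤ 1 := pow_le_one₀ ht0 ht1
  have htpow3 : t ^ 3 ≤ 1 := pow_le_one₀ ht0 ht1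
  have htpow2' : 0 ≤ t ^ 2 := by positivity
  have htpow3' : 0 ≤ t ^ 3 := by positivity
  obtain ⟨U2, hU2def⟩ : ∃ u : ℝ, u = q1 βS βΩ A + 2 * q2 βS βΩ A * t + 3 * q3 βS βΩ A * t ^ 2 := ⟨_, rfl⟩
  obtain ⟨U1, hU1def⟩ : ∃ u : ℝ, u = dq1 βS βΩ A * t + dq2 βS βΩ A * t ^ 2 + dq3 βS βΩ A * t ^ 3 := ⟨_, rfl⟩
  obtain ⟨P, hPdef⟩ : ∃ u : ℝ, u = q1 βS βΩ A * t + q2 βS βΩ A * t ^ 2 + q3 βS βΩ A * t ^ 3 := ⟨_, rfl⟩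
  have habs_mul : ∀ (a b : ℝ), |b| ≤ 1 → 0 ≤ b → |a * b| ≤ |a| := by
    intro a b hb hb0
    rw [abs_mul]
    calc |a| * |b| ≤ |a| * 1 := mul_le_mul_of_nonneg_left hb (abs_nonneg a)
      _ = |a| := mul_one _
  have hU2b : |U2| ≤ 6 * Q := by
    rw [hU2def]
    calc |q1 βS βΩ A + 2 * q2 βS βΩ A * t + 3 * q3 βS βΩ A * t ^ 2|
        ≤ |q1 βS βΩ A| + |2 * q2 βS βΩ A * t| + |3 * q3 βS βΩ A * t ^ 2| :=
          (abs_add_le _ _).trans (add_le_add_left (abs_add_le _ _) _)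
      _ ≤ Q + 2 * Q + 3 * Q := by
          refine add_le_add (add_le_add hq1 ?_) ?_
          · calc |2 * q2 βS βΩ A * t| ≤ |2 * q2 βS βΩ A| :=
                habs_mul _ t (by rw [abs_of_nonneg ht0]; exact ht1) ht0
              _ = 2 * |q2 βS βΩ A| := by rw [abs_mul]; norm_num
              _ ≤ 2 * Q := by linarith
          · calc |3 * q3 βS βΩ A * t ^ 2| ≤ |3 * q3 βS βΩ A| :=
                habs_mul _ _ (by rw [abs_of_nonneg htpow2']; exact htpow2) htpow2'
              _ = 3 * |q3 βS βΩ A| := by rw [abs_mul]; norm_num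
              _ ≤ 3 * Q := by linarith
      _ = 6 * Q := by ring
  have hU1b : |U1| ≤ 3 * Q := by
    rw [hU1def]
    calc |dq1 βS βΩ A * t + dq2 βS βΩ A * t ^ 2 + dq3 βS βΩ A * t ^ 3|
        ≤ |dq1 βS βΩ A * t| + |dq2 βS βΩ A * t ^ 2| + |dq3 βS βΩ A * t ^ 3| :=
          (abs_add_le _ _).trans (add_le_add_left (abs_add_le _ _) _)
      _ ≤ Q + Q + Q := by
          refine add_le_add (add_le_add ?_ ?_) ?_
          · exact (habs_mul _ t (by rw [abs_of_nonneg ht0]; exact ht1) ht0).trans hdq1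
          · exact (habs_mul _ _ (by rw [abs_of_nonneg htpow2']; exact htpow2) htpow2').trans hdq2
          · exact (habs_mul _ _ (by rw [abs_of_nonneg htpow3']; exact htpow3) htpow3').trans hdq3
      _ = 3 * Q := by ring
  have hPb : |P| ≤ 3 * Q := by
    rw [hPdef]
    calc |q1 βS βΩ A * t + q2 βS βΩ A * t ^ 2 + q3 βS βΩ A * t ^ 3|
        ≤ |q1 βS βΩ A * t| + |q2 βS βΩ A * t ^ 2| + |q3 βS βΩ A * t ^ 3| :=
          (abs_add_le _ _).trans (add_le_add_left (abs_add_le _ _) _)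
      _ ≤ Q + Q + Q := by
          refine add_le_add (add_le_add ?_ ?_) ?_
          · exact (habs_mul _ t (by rw [abs_of_nonneg ht0]; exact ht1) ht0).trans hq1
          · exact (habs_mul _ _ (by rw [abs_of_nonneg htpow2']; exact htpow2) htpow2').trans hq2
          · exact (habs_mul _ _ (by rw [abs_of_nonneg htpow3']; exact htpow3) htpow3').trans hq3
      _ = 3 * Q := by ring
  -- rewrite the derivatives
  have hdZ : deriv (fun z' => Psi βS βΩ h r z') z = U2 / A := by
    have hd := (hasDerivAt_Psi_z βS βΩ h r z).deriv
    rw [← hAdef, ← htdef, ← hU2def] at hd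
    exact hd
  have hdR : deriv (fun r' => r' ^ 2 * Psi βS βΩ h r' z) r
      = 2 * r * P + r ^ 2 * (U1 * g - U2 * (z * g / A ^ 2)) := by
    have hd := (hasDerivAt_r2Psi βS βΩ h z hr21 hAne' hDD).deriv
    rw [← hAdef, ← htdef, ← hgdef, ← hU1def, ← hU2def, ← hPdef] at hd
    exact hd
  simp only [tphi1, tphi2, tphi3, dZ]
  rw [← hrdef, ← hzdef, hdZ, hdR]
  clear hdZ hdR hQ hQA
  have hx12 : x.1 ^ 2 + x.2.1 ^ 2 = r ^ 2 := by
    rw [hrdef, rad, Real.sq_sqrt (by positivity)]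
  have e12 : (1 / 2 * (-x.1 * (U2 / A))) ^ 2 + (1 / 2 * (-x.2.1 * (U2 / A))) ^ 2
      = r ^ 2 * (U2 / A) ^ 2 / 4 := by rw [← hx12]; ring
  have hU2sq : U2 ^ 2 ≤ 36 * Q ^ 2 := by
    calc U2 ^ 2 = |U2| ^ 2 := (sq_abs _).symm
      _ ≤ (6 * Q) ^ 2 := pow_le_pow_left₀ (abs_nonneg _) hU2b 2
      _ = 36 * Q ^ 2 := by ring
  have hb12 : r ^ 2 * (U2 / A) ^ 2 / 4 ≤ 18 * Q ^ 2 / A := by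
    have key : r ^ 2 * U2 ^ 2 ≤ 2 * A * (36 * Q ^ 2) :=
      mul_le_mul hr2A hU2sq (sq_nonneg _) (by positivity)
    calc r ^ 2 * (U2 / A) ^ 2 / 4 = r ^ 2 * U2 ^ 2 / (4 * A ^ 2) := by ring
      _ ≤ 2 * A * (36 * Q ^ 2) / (4 * A ^ 2) := by gcongr
      _ = 18 * Q ^ 2 / A := by field_simp; ring
  have hb3 : (1 / 2 * (1 / r * (2 * r * P + r ^ 2 * (U1 * g - U2 * (z * g / A ^ 2))))) ^ 2
      ≤ 324 * Q ^ 2 := by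
    rcases eq_or_lt_of_le hr0 with hr | hrpos
    · rw [← hr]; norm_num; positivity
    · have e3 : 1 / 2 * (1 / r * (2 * r * P + r ^ 2 * (U1 * g - U2 * (z * g / A ^ 2))))
          = P + r / 2 * (U1 * g - U2 * (z * g / A ^ 2)) := by
        field_simp
      rw [e3]
      have h1 : |U1 * g| ≤ 3 * Q * (2 * r) := by
        rw [abs_mul, abs_of_nonneg hg0]
        exact mul_le_mul hU1b hg2 hg0 (by positivity)
      have hzg0 : 0 ≤ z * g / A ^ 2 := by positivity
      have hzg : z * g / A ^ 2 ≤ 2 * r / A := by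
        rw [div_le_div_iff₀ (by positivity) hA0]
        have h' := mul_le_mul_of_nonneg_right (mul_le_mul hzA.le hg2 hg0 hA0.le) hA0.le
        linarith only [h']
      have h2 : |U2 * (z * g / A ^ 2)| ≤ 6 * Q * (2 * r / A) := by
        rw [abs_mul, abs_of_nonneg hzg0]
        exact mul_le_mul hU2b hzg hzg0 (by positivity)
      have hwle : r ^ 2 / A ≤ 2 := by rw [div_le_iff₀ hA0]; linarith
      have habs : |P + r / 2 * (U1 * g - U2 * (z * g / A ^ 2))| ≤ 18 * Q := by
        calc |P + r / 2 * (U1 * g - U2 * (z * g / A ^ 2))|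
            ≤ |P| + |r / 2 * (U1 * g - U2 * (z * g / A ^ 2))| := abs_add_le _ _
          _ = |P| + r / 2 * |U1 * g - U2 * (z * g / A ^ 2)| := by
              rw [abs_mul, abs_of_nonneg (by linarith : (0:ℝ) ≤ r / 2)]
          _ ≤ |P| + r / 2 * (|U1 * g| + |U2 * (z * g / A ^ 2)|) := by
              have habs2 := abs_sub (U1 * g) (U2 * (z * g / A ^ 2))
              have hhalf : (0:ℝ) ≤ r / 2 := by linarith
              linarith only [mul_le_mul_of_nonneg_left habs2 hhalf]
          _ ≤ 3 * Q + r / 2 * (3 * Q * (2 * r) + 6 * Q * (2 * r / A)) := by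
              have hhalf : (0:ℝ) ≤ r / 2 := by linarith
              have hsum := add_le_add h1 h2
              linarith only [mul_le_mul_of_nonneg_left hsum hhalf, hPb]
          _ = 3 * Q + 3 * Q * r ^ 2 + 6 * Q * (r ^ 2 / A) := by field_simp; ring
          _ ≤ 18 * Q := by
              linarith only [mul_le_mul_of_nonneg_left hwle (by linarith only [hQ0] : (0:ℝ) ≤ 6 * Q),
                mul_le_mul_of_nonneg_left hr21.le (by linarith only [hQ0] : (0:ℝ) ≤ 3 * Q), hQ0]
      calc (P + r / 2 * (U1 * g - U2 * (z * g / A ^ 2))) ^ 2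
          = |P + r / 2 * (U1 * g - U2 * (z * g / A ^ 2))| ^ 2 := (sq_abs _).symm
        _ ≤ (18 * Q) ^ 2 := by
            apply pow_le_pow_left₀ (abs_nonneg _) habs
        _ = 324 * Q ^ 2 := by ring
  have hb3' : (324:ℝ) * Q ^ 2 ≤ 648 * Q ^ 2 / A := by
    rw [le_div_iff₀ hA0]
    linarith only [mul_le_mul_of_nonneg_left hAle2 (by positivity : (0:ℝ) ≤ 324 * Q ^ 2)]
  have hfin : 18 * Q ^ 2 / A + 648 * Q ^ 2 / A ≤ 700 * Q ^ 2 / A := by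
    rw [← add_div]
    gcongr
    linarith only [sq_nonneg Q]
  linarith only [e12, hb12, hb3, hb3', hfin]


/-- Estimate (A.8)/(3.20) (slip case): the `L²(Ω_{h,δ})` norm of the test field `φ̃_h`
is bounded uniformly in `h`. -/
theorem tphi_L2_bound (δ βS βΩ : ℝ) (hδ : δ ∈ Set.Ioo (0 : ℝ) (1 / 4))
    (hβS : 0 < βS) (hβΩ : 0 < βΩ) :
    ∃ C : ℝ, 0 < C ∧ ∀ h ∈ Set.Ioo (0 : ℝ) (1 / 4),
      (∫ x in Omg h δ,
          (tphi1 βS βΩ h x) ^ 2 + (tphi2 βS βΩ h x) ^ 2 + (tphi3 βS βΩ h x) ^ 2) ≤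
        C ^ 2 := by
  obtain ⟨Q, hQ1, hQ⟩ := exists_Q βS βΩ hβS hβΩ
  have hQ0 : (0:ℝ) < Q := lt_of_lt_of_le one_pos hQ1
  obtain ⟨M, hMdef⟩ : ∃ u : ℝ, u = 700 * Q ^ 2 := ⟨_, rfl⟩
  have hM0 : 0 < M := by rw [hMdef]; positivity
  refine ⟨Real.sqrt (4 * δ ^ 2 * M + 1), Real.sqrt_pos.2 (by positivity), ?_⟩
  intro h hh
  rw [Real.sq_sqrt (by positivity)]
  have hcont_gam : Continuous gam := by
    unfold gam
    exact continuous_const.sub (Real.continuous_sqrt.comp (continuous_const.sub (continuous_pow 2)))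
  have hcont_rad : Continuous rad := by
    unfold rad
    exact Real.continuous_sqrt.comp (((continuous_fst.pow 2)).add ((continuous_snd.fst.pow 2)))
  have hApos : ∀ x : ℝ × ℝ × ℝ, 0 < h + gam (rad x) := fun x => by
    have := gam_nonneg (rad x); linarith [hh.1]
  have hOopen : IsOpen (Omg h δ) := by
    have h1 : IsOpen {x : ℝ × ℝ × ℝ | 0 < x.2.2} :=
      isOpen_lt continuous_const (continuous_snd.comp continuous_snd)
    have h2 : IsOpen {x : ℝ × ℝ × ℝ | x.2.2 < h + gam (rad x)} :=
      isOpen_lt (continuous_snd.comp continuous_snd)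
        (continuous_const.add (hcont_gam.comp hcont_rad))
    have h3 : IsOpen {x : ℝ × ℝ × ℝ | rad x < δ} := isOpen_lt hcont_rad continuous_const
    have : Omg h δ = {x : ℝ × ℝ × ℝ | 0 < x.2.2} ∩
        ({x : ℝ × ℝ × ℝ | x.2.2 < h + gam (rad x)} ∩ {x : ℝ × ℝ × ℝ | rad x < δ}) := rfl
    rw [this]
    exact h1.inter (h2.inter h3)
  have hOmeas : MeasurableSet (Omg h δ) := hOopen.measurableSet
  by_cases hmeas : AEStronglyMeasurable
      (fun x => (tphi1 βS βΩ h x) ^ 2 + (tphi2 βS βΩ h x) ^ 2 + (tphi3 βS βΩ h x) ^ 2)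
      (volume.restrict (Omg h δ))
  swap
  · rw [integral_undef (fun hint => hmeas hint.aestronglyMeasurable)]
    positivity
  have hnonneg : 0 ≤ᵐ[volume.restrict (Omg h δ)]
      fun x => (tphi1 βS βΩ h x) ^ 2 + (tphi2 βS βΩ h x) ^ 2 + (tphi3 βS βΩ h x) ^ 2 :=
    Filter.Eventually.of_forall (fun x => by positivity)
  rw [MeasureTheory.integral_eq_lintegral_of_nonneg_ae hnonneg hmeas]
  -- the dominating function
  set F : ℝ × ℝ × ℝ → ENNReal :=
    (Omg h δ).indicator (fun x => ENNReal.ofReal (M / (h + gam (rad x)))) with hFdef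
  have hcontG : Continuous fun x : ℝ × ℝ × ℝ => M / (h + gam (rad x)) :=
    continuous_const.div (continuous_const.add (hcont_gam.comp hcont_rad))
      (fun x => ne_of_gt (hApos x))
  have hFmeas : Measurable F :=
    ((ENNReal.continuous_ofReal.comp hcontG).measurable).indicator hOmeas
  have hstep1 : (∫⁻ x in Omg h δ, ENNReal.ofReal
      ((tphi1 βS βΩ h x) ^ 2 + (tphi2 βS βΩ h x) ^ 2 + (tphi3 βS βΩ h x) ^ 2)) ≤ ∫⁻ x, F x := by
    rw [hFdef, lintegral_indicator hOmeas]
    apply lintegral_mono_ae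
    filter_upwards [ae_restrict_mem hOmeas] with x hx
    apply ENNReal.ofReal_le_ofReal
    rw [hMdef]
    exact integrand_bound βS βΩ hβS hβΩ Q hQ1 hQ hδ hh hx
  -- Tonelli
  have hbound : ∫⁻ x, F x ≤ ENNReal.ofReal (4 * δ ^ 2 * M) := by
    have hδ0 : 0 < δ := hδ.1
    have key3 : ∀ x1 x2 : ℝ, (∫⁻ x3 : ℝ, F (x1, x2, x3))
        ≤ (Set.Ioo (-δ) δ).indicator (fun _ => ENNReal.ofReal M) x1
          * (Set.Ioo (-δ) δ).indicator (fun _ => (1:ENNReal)) x2 := by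
      intro x1 x2
      by_cases hio : Real.sqrt (x1 ^ 2 + x2 ^ 2) < δ
      · have habs1 : |x1| < δ := by
          have h1 : |x1| ≤ Real.sqrt (x1 ^ 2 + x2 ^ 2) := by
            rw [← Real.sqrt_sq_eq_abs]
            exact Real.sqrt_le_sqrt (by nlinarith [sq_nonneg x2])
          linarith
        have habs2 : |x2| < δ := by
          have h1 : |x2| ≤ Real.sqrt (x1 ^ 2 + x2 ^ 2) := by
            rw [← Real.sqrt_sq_eq_abs]
            exact Real.sqrt_le_sqrt (by nlinarith [sq_nonneg x1])
          linarith
        have hx1m : x1 ∈ Set.Ioo (-δ) δ := Set.mem_Ioo.2 (abs_lt.mp habs1)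
        have hx2m : x2 ∈ Set.Ioo (-δ) δ := Set.mem_Ioo.2 (abs_lt.mp habs2)
        rw [Set.indicator_of_mem hx1m, Set.indicator_of_mem hx2m, mul_one]
        have hA0 : 0 < h + gam (Real.sqrt (x1 ^ 2 + x2 ^ 2)) := by
          have := gam_nonneg (Real.sqrt (x1 ^ 2 + x2 ^ 2)); linarith [hh.1]
        have hfun : (fun x3 : ℝ => F (x1, x2, x3))
            = (Set.Ioo 0 (h + gam (Real.sqrt (x1 ^ 2 + x2 ^ 2)))).indicator
              (fun _ => ENNReal.ofReal (M / (h + gam (Real.sqrt (x1 ^ 2 + x2 ^ 2))))) := by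
          funext x3
          rw [hFdef]
          simp only [Set.indicator_apply, Omg, Set.mem_setOf_eq, Set.mem_Ioo, rad]
          by_cases h3 : 0 < x3 ∧ x3 < h + gam (Real.sqrt (x1 ^ 2 + x2 ^ 2))
          · rw [if_pos ⟨h3.1, h3.2, hio⟩, if_pos h3]
          · rw [if_neg (fun hc => h3 ⟨hc.1, hc.2.1⟩), if_neg h3]
        rw [hfun, lintegral_indicator measurableSet_Ioo, setLIntegral_const, Real.volume_Ioo,
          ← ENNReal.ofReal_mul (by positivity)]
        apply le_of_eq
        congr 1
        rw [sub_zero]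
        field_simp
      · have hz : ∀ x3 : ℝ, F (x1, x2, x3) = 0 := by
          intro x3
          rw [hFdef, Set.indicator_of_notMem (fun hmem => hio hmem.2.2)]
        simp only [hz, lintegral_zero]
        exact zero_le'
    have key2 : ∀ x1 : ℝ, (∫⁻ y : ℝ × ℝ, F (x1, y))
        ≤ (Set.Ioo (-δ) δ).indicator (fun _ => ENNReal.ofReal M) x1 * ENNReal.ofReal (2 * δ) := by
      intro x1
      have hsec : Measurable fun y : ℝ × ℝ => F (x1, y) := hFmeas.comp measurable_prodMk_left
      rw [MeasureTheory.Measure.volume_eq_prod, MeasureTheory.lintegral_prod _ hsec.aemeasurable]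
      calc ∫⁻ x2 : ℝ, ∫⁻ x3 : ℝ, F (x1, x2, x3)
          ≤ ∫⁻ x2 : ℝ, (Set.Ioo (-δ) δ).indicator (fun _ => ENNReal.ofReal M) x1
              * (Set.Ioo (-δ) δ).indicator (fun _ => (1:ENNReal)) x2 := lintegral_mono (key3 x1)
        _ = (Set.Ioo (-δ) δ).indicator (fun _ => ENNReal.ofReal M) x1
              * ∫⁻ x2 : ℝ, (Set.Ioo (-δ) δ).indicator (fun _ => (1:ENNReal)) x2 :=
            lintegral_const_mul _ (measurable_const.indicator measurableSet_Ioo)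
        _ = (Set.Ioo (-δ) δ).indicator (fun _ => ENNReal.ofReal M) x1 * ENNReal.ofReal (2 * δ) := by
            rw [lintegral_indicator_const measurableSet_Ioo, one_mul, Real.volume_Ioo]
            congr 2
            ring
    calc ∫⁻ x, F x = ∫⁻ x1 : ℝ, ∫⁻ y : ℝ × ℝ, F (x1, y) := by
          rw [MeasureTheory.Measure.volume_eq_prod, MeasureTheory.lintegral_prod _ hFmeas.aemeasurable]
      _ ≤ ∫⁻ x1 : ℝ, (Set.Ioo (-δ) δ).indicator (fun _ => ENNReal.ofReal M) x1
            * ENNReal.ofReal (2 * δ) := lintegral_mono key2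
      _ = (∫⁻ x1 : ℝ, (Set.Ioo (-δ) δ).indicator (fun _ => ENNReal.ofReal M) x1)
            * ENNReal.ofReal (2 * δ) :=
          lintegral_mul_const _ (measurable_const.indicator measurableSet_Ioo)
      _ = ENNReal.ofReal M * volume (Set.Ioo (-δ) δ) * ENNReal.ofReal (2 * δ) := by
          rw [lintegral_indicator_const measurableSet_Ioo]
      _ = ENNReal.ofReal (4 * δ ^ 2 * M) := by
          rw [Real.volume_Ioo, ← ENNReal.ofReal_mul hM0.le,
            ← ENNReal.ofReal_mul (mul_nonneg hM0.le (by linarith))]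
          congr 1
          ring
  calc (∫⁻ x in Omg h δ, ENNReal.ofReal
      ((tphi1 βS βΩ h x) ^ 2 + (tphi2 βS βΩ h x) ^ 2 + (tphi3 βS βΩ h x) ^ 2)).toReal
      ≤ (ENNReal.ofReal (4 * δ ^ 2 * M)).toReal :=
        ENNReal.toReal_mono ENNReal.ofReal_ne_top (hstep1.trans hbound)
    _ = 4 * δ ^ 2 * M := ENNReal.toReal_ofReal (by positivity)
    _ ≤ 4 * δ ^ 2 * M + 1 := by linarith
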